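/- Let T be a robustness tree over a type X, k > 0 a real, and S ⊆ X. Suppose x* ∈ S satisfies V̄_k(T,x*) ≤ 0 and is optimal for the original problem, i.e. V̄_k(T,x*) ≤ V̄_k(T,x) for every x ∈ S with V̄_k(T,x) ≤ 0. Then the pair (x*, V̄_k(T,x*)) is optimal for the decomposed problem: x* ∈ S, V̄_k(T,x*) ≤ 0, Dec_k(T, x*, V̄_k(T,x*)) holds, and for every x ∈ S and s ∈ ℝ with s ≤ 0 and Dec_k(T,x,s), one has V̄_k(T,x*) ≤ s. -/
import Mathlib


/-- The smoothed minimum of two reals (log-sum-exp under-approximation). -/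
noncomputable def smin (k a b : ℝ) : ℝ :=
  -(1 / k) * Real.log (Real.exp (-k * a) + Real.exp (-k * b))

/-- A robustness tree: leaves are predicates, `maxN` are conjunction-like nodes,
`minN` are disjunction-like nodes. -/
inductive RTree (X : Type*) where
  | leaf : (X → ℝ) → RTree X
  | maxN : RTree X → RTree X → RTree X
  | minN : RTree X → RTree X → RTree X

/-- The smoothed (reversed) robustness value of a tree. -/
noncomputable def sVal {X : Type*} (k : ℝ) : RTree X → X → ℝ
  | RTree.leaf g, x => g x
  | RTree.maxN t1 t2, x => max (sVal k t1 x) (sVal k t2 x)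
  | RTree.minN t1 t2, x => smin k (sVal k t1 x) (sVal k t2 x)

/-- The decomposed-feasibility predicate of the robustness decomposition. -/
def Dec {X : Type*} (k : ℝ) : RTree X → X → ℝ → Prop
  | RTree.leaf g, x, s => g x ≤ s
  | RTree.maxN t1 t2, x, s => Dec k t1 x s ∧ Dec k t2 x s
  | RTree.minN t1 t2, x, s =>
      ∃ s1 s2 : ℝ, Dec k t1 x s1 ∧ Dec k t2 x s2 ∧ smin k s1 s2 ≤ s


lemma Dec_mono {X : Type*} {k : ℝ} {T : RTree X} {x : X} {s s' : ℝ}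
    (h : Dec k T x s) (hss : s ≤ s') : Dec k T x s' := by
  induction T generalizing s s' with
  | leaf g => exact le_trans h hss
  | maxN t1 t2 ih1 ih2 => exact ⟨ih1 h.1 hss, ih2 h.2 hss⟩
  | minN t1 t2 ih1 ih2 =>
    obtain ⟨s1, s2, h1, h2, hs⟩ := h
    exact ⟨s1, s2, h1, h2, le_trans hs hss⟩

lemma smin_mono (k a b a' b' : ℝ) (hk : 0 < k) (ha : a ≤ a') (hb : b ≤ b') :
    smin k a b ≤ smin k a' b' := by
  unfold smin
  have hgoal : Real.log (Real.exp (-k * a') + Real.exp (-k * b')) ≤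
      Real.log (Real.exp (-k * a) + Real.exp (-k * b)) → -(1 / k) *
      Real.log (Real.exp (-k * a) + Real.exp (-k * b)) ≤ -(1 / k) *
      Real.log (Real.exp (-k * a') + Real.exp (-k * b')) := by
    intro h
    have : (0:ℝ) < 1 / k := by positivity
    nlinarith
  apply hgoal
  apply Real.log_le_log (by positivity)
  have h1 : Real.exp (-k * a') ≤ Real.exp (-k * a) := by
    apply Real.exp_le_exp.2; nlinarith
  have h2 : Real.exp (-k * b') ≤ Real.exp (-k * b) := by
    apply Real.exp_le_exp.2; nlinarith
  linarith

lemma Dec_refl {X : Type*} (k : ℝ) (T : RTree X) (x : X) : Dec k T x (sVal k T x) := by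
  induction T with
  | leaf g => simp [Dec, sVal]
  | maxN t1 t2 ih1 ih2 =>
    refine ⟨?_, ?_⟩
    · exact Dec_mono ih1 (le_max_left _ _)
    · exact Dec_mono ih2 (le_max_right _ _)
  | minN t1 t2 ih1 ih2 =>
    exact ⟨_, _, ih1, ih2, le_refl _⟩

lemma Dec_sound {X : Type*} (k : ℝ) (hk : 0 < k) (T : RTree X) (x : X) (s : ℝ)
    (h : Dec k T x s) : sVal k T x ≤ s := by
  induction T generalizing s with
  | leaf g => exact h
  | maxN t1 t2 ih1 ih2 => exact max_le (ih1 _ h.1) (ih2 _ h.2)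
  | minN t1 t2 ih1 ih2 =>
    obtain ⟨s1, s2, h1, h2, hs⟩ := h
    calc sVal k (RTree.minN t1 t2) x = smin k (sVal k t1 x) (sVal k t2 x) := rfl
    _ ≤ smin k s1 s2 := smin_mono k _ _ _ _ hk (ih1 _ h1) (ih2 _ h2)
    _ ≤ s := hs


theorem original_optimal_implies_decomposed_optimal {X : Type*} (T : RTree X) (k : ℝ)
    (hk : 0 < k) (S : Set X) (xs : X) (hxS : xs ∈ S) (hx0 : sVal k T xs ≤ 0)
    (hopt : ∀ x ∈ S, sVal k T x ≤ 0 → sVal k T xs ≤ sVal k T x) :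
    xs ∈ S ∧ sVal k T xs ≤ 0 ∧ Dec k T xs (sVal k T xs) ∧
      ∀ x ∈ S, ∀ s : ℝ, s ≤ 0 → Dec k T x s → sVal k T xs ≤ s := by
  refine ⟨hxS, hx0, Dec_refl k T xs, ?_⟩
  intro x hxS' s hs hd
  have hvs : sVal k T x ≤ s := Dec_sound k hk T x s hd
  exact le_trans (hopt x hxS' (le_trans hvs hs)) hvs
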